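/- Let p and q be distinct primes with p ≡ 3 (mod 4) and q ≡ 3 (mod 8), and let r' be an integer with 4q dividing (r')² + p. Then the set of reduced norms of elements of the Gross lattice of R'(q,r') in B = ℍ(−p, −q) is exactly the set of rationals of the form p·x² + 4q·y² + (((r')² + p)/q)·z² + 4r'·y·z, where x, y, z range over the integers. -/

import Mathlib

open Quaternion

/-- The reduced trace of a quaternion: `tr v = v + star v` (as a scalar). -/
def trd {c₁ c₂ : ℚ} (v : ℍ[ℚ, c₁, c₂]) : ℚ := (v + star v).re

/-- The reduced norm of a quaternion: `nrd v = v * star v` (as a scalar). -/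
def nrd {c₁ c₂ : ℚ} (v : ℍ[ℚ, c₁, c₂]) : ℚ := (v * star v).re

/-- `α` in `B = ℍ(-p, -q)`, with `α² = -p`. -/
def qa (p q : ℕ) : ℍ[ℚ, -(p : ℚ), -(q : ℚ)] := ⟨0, 1, 0, 0⟩

/-- `β` in `B = ℍ(-p, -q)`, with `β² = -q`. -/
def qb (p q : ℕ) : ℍ[ℚ, -(p : ℚ), -(q : ℚ)] := ⟨0, 0, 1, 0⟩

/-- The ℤ-lattice `R'(q,r')` spanned by `1, (1+α)/2, β, (r'+α)β/(2q)`. -/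
def Rqr' (p q : ℕ) (r' : ℤ) : Submodule ℤ ℍ[ℚ, -(p : ℚ), -(q : ℚ)] :=
  Submodule.span ℤ
    ({1, ((2 : ℚ)⁻¹) • (1 + qa p q), qb p q,
      ((2 * q : ℚ)⁻¹) • (((r' : ℚ) • (1 : ℍ[ℚ, -(p : ℚ), -(q : ℚ)]) + qa p q) * qb p q)} :
      Set ℍ[ℚ, -(p : ℚ), -(q : ℚ)])

/-- The Gross lattice `{x ∈ ℤ + 2R : tr(x) = 0}` of a ℤ-lattice `R` in `ℍ(-p,-q)`. -/
def GrossLattice (p q : ℕ) (R : Submodule ℤ ℍ[ℚ, -(p : ℚ), -(q : ℚ)]) :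
    Set ℍ[ℚ, -(p : ℚ), -(q : ℚ)] :=
  {v | (∃ n : ℤ, ∃ u ∈ R, v = (n : ℍ[ℚ, -(p : ℚ), -(q : ℚ)]) + 2 • u) ∧ trd v = 0}

set_option maxHeartbeats 2000000 in
theorem gross_lattice_norms_Rqr' (p q : ℕ) (hp : p.Prime) (hq : q.Prime) (hpq : p ≠ q)
    (hp4 : p % 4 = 3) (hq8 : q % 8 = 3) (r' : ℤ)
    (hdvd : (4 * q : ℤ) ∣ r' ^ 2 + (p : ℤ)) :
    {t : ℚ | ∃ v ∈ GrossLattice p q (Rqr' p q r'), nrd v = t} =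
      {t : ℚ | ∃ x y z : ℤ,
        t = (p : ℚ) * (x : ℚ) ^ 2 + (4 * q : ℚ) * (y : ℚ) ^ 2 +
          (((r' : ℚ) ^ 2 + (p : ℚ)) / (q : ℚ)) * (z : ℚ) ^ 2 +
          (4 * r' : ℚ) * (y : ℚ) * (z : ℚ)} := by
  have hq0 : (q : ℚ) ≠ 0 := Nat.cast_ne_zero.mpr hq.ne_zero
  ext t
  simp only [Set.mem_setOf_eq]
  constructor
  · rintro ⟨v, ⟨⟨n, u, hu, rfl⟩, htr⟩, rfl⟩
    rw [Rqr', Submodule.mem_span_insert] at hu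
    obtain ⟨a, u₁, hu₁, rfl⟩ := hu
    rw [Submodule.mem_span_insert] at hu₁
    obtain ⟨b, u₂, hu₂, rfl⟩ := hu₁
    rw [Submodule.mem_span_insert] at hu₂
    obtain ⟨c, u₃, hu₃, rfl⟩ := hu₂
    rw [Submodule.mem_span_singleton] at hu₃
    obtain ⟨d, rfl⟩ := hu₃
    refine ⟨b, c, d, ?_⟩
    simp only [trd, qa, qb, nrd, QuaternionAlgebra.re_add, QuaternionAlgebra.re_mul,
      QuaternionAlgebra.re_smul, QuaternionAlgebra.imI_smul, QuaternionAlgebra.imJ_smul,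
      QuaternionAlgebra.imK_smul, QuaternionAlgebra.imI_add, QuaternionAlgebra.imJ_add,
      QuaternionAlgebra.imK_add, QuaternionAlgebra.re_star, QuaternionAlgebra.imI_star,
      QuaternionAlgebra.imJ_star, QuaternionAlgebra.imK_star, QuaternionAlgebra.re_one,
      QuaternionAlgebra.imI_one, QuaternionAlgebra.imJ_one, QuaternionAlgebra.imK_one,
      QuaternionAlgebra.re_intCast, QuaternionAlgebra.imI_intCast, QuaternionAlgebra.imJ_intCast,
      QuaternionAlgebra.imK_intCast, QuaternionAlgebra.imI_mul, QuaternionAlgebra.imJ_mul, QuaternionAlgebra.imK_mul, zsmul_eq_mul, nsmul_eq_mul, QuaternionAlgebra.re_ofNat, QuaternionAlgebra.imI_ofNat, QuaternionAlgebra.imJ_ofNat, QuaternionAlgebra.imK_ofNat, QuaternionAlgebra.re_natCast, QuaternionAlgebra.imI_natCast, QuaternionAlgebra.imJ_natCast, QuaternionAlgebra.imK_natCast, smul_eq_mul] at htr ⊢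
    push_cast at htr ⊢
    field_simp at htr ⊢
    linear_combination ((q:ℚ)*((n:ℚ)+2*(a:ℚ)+(b:ℚ))) * htr
  · rintro ⟨x, y, z, rfl⟩
    refine ⟨((-x : ℤ) : ℍ[ℚ, -(p : ℚ), -(q : ℚ)]) + 2 •
      ((x • (((2 : ℚ)⁻¹) • (1 + qa p q))) + (y • qb p q) +
        z • (((2 * q : ℚ)⁻¹) • (((r' : ℚ) • (1 : ℍ[ℚ, -(p : ℚ), -(q : ℚ)]) + qa p q) * qb p q))),
      ⟨⟨-x, _, ?_, rfl⟩, ?_⟩, ?_⟩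
    · refine Submodule.add_mem _ (Submodule.add_mem _ ?_ ?_) ?_ <;>
        exact Submodule.smul_mem _ _ (Submodule.subset_span (by simp))
    · simp only [trd, qa, qb, QuaternionAlgebra.re_add, QuaternionAlgebra.re_mul,
        QuaternionAlgebra.re_smul, QuaternionAlgebra.imI_smul, QuaternionAlgebra.imJ_smul,
        QuaternionAlgebra.imK_smul, QuaternionAlgebra.imI_add, QuaternionAlgebra.imJ_add,
        QuaternionAlgebra.imK_add, QuaternionAlgebra.re_star, QuaternionAlgebra.imI_star,
        QuaternionAlgebra.imJ_star, QuaternionAlgebra.imK_star, QuaternionAlgebra.re_one,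
        QuaternionAlgebra.imI_one, QuaternionAlgebra.imJ_one, QuaternionAlgebra.imK_one,
        QuaternionAlgebra.re_intCast, QuaternionAlgebra.imI_intCast, QuaternionAlgebra.imJ_intCast,
        QuaternionAlgebra.imK_intCast, QuaternionAlgebra.imI_mul, QuaternionAlgebra.imJ_mul, QuaternionAlgebra.imK_mul, zsmul_eq_mul, nsmul_eq_mul, QuaternionAlgebra.re_ofNat, QuaternionAlgebra.imI_ofNat, QuaternionAlgebra.imJ_ofNat, QuaternionAlgebra.imK_ofNat, QuaternionAlgebra.re_natCast, QuaternionAlgebra.imI_natCast, QuaternionAlgebra.imJ_natCast, QuaternionAlgebra.imK_natCast, smul_eq_mul]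
      push_cast
      ring
    · simp only [trd, qa, qb, nrd, QuaternionAlgebra.re_add, QuaternionAlgebra.re_mul,
        QuaternionAlgebra.re_smul, QuaternionAlgebra.imI_smul, QuaternionAlgebra.imJ_smul,
        QuaternionAlgebra.imK_smul, QuaternionAlgebra.imI_add, QuaternionAlgebra.imJ_add,
        QuaternionAlgebra.imK_add, QuaternionAlgebra.re_star, QuaternionAlgebra.imI_star,
        QuaternionAlgebra.imJ_star, QuaternionAlgebra.imK_star, QuaternionAlgebra.re_one,
        QuaternionAlgebra.imI_one, QuaternionAlgebra.imJ_one, QuaternionAlgebra.imK_one,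
        QuaternionAlgebra.re_intCast, QuaternionAlgebra.imI_intCast, QuaternionAlgebra.imJ_intCast,
        QuaternionAlgebra.imK_intCast, QuaternionAlgebra.imI_mul, QuaternionAlgebra.imJ_mul, QuaternionAlgebra.imK_mul, zsmul_eq_mul, nsmul_eq_mul, QuaternionAlgebra.re_ofNat, QuaternionAlgebra.imI_ofNat, QuaternionAlgebra.imJ_ofNat, QuaternionAlgebra.imK_ofNat, QuaternionAlgebra.re_natCast, QuaternionAlgebra.imI_natCast, QuaternionAlgebra.imJ_natCast, QuaternionAlgebra.imK_natCast, smul_eq_mul]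
      push_cast
      field_simp
      ring
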